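/- Let F be a linear subspace of F_2^n such that J_n F is contained in F and every element of F has coordinate sum 0 (i.e., F is contained in Ker c where c(y) = sum_i y_i). Then every element y of F satisfies y_i = y_{n+1-i} for all i, and additionally y_{(n+1)/2} = 0 when n is odd; i.e., F is contained in Ker S, where S maps y to the vector of sums (y_1 + y_n, y_2 + y_{n-1}, ...), with last entry y_{ceil(n/2)} itself when n is odd. -/

import Mathlib

private lemma two_cancel : ∀ a : ZMod 2, a + a = 0 := by decide

/-- Entry of `J.mulVec y` at a natural index. -/
private lemma aux1 (n : ℕ) (J : Matrix (Fin n) (Fin n) (ZMod 2))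
    (hJ : ∀ i j : Fin n, J i j = if (i : ℕ) + 1 = j ∨ (j : ℕ) + 1 = i then 1 else 0)
    (y : Fin n → ZMod 2) (m : ℕ) (hm : m < n) :
    J.mulVec y ⟨m, hm⟩ =
      (if h : m + 1 < n then y ⟨m + 1, h⟩ else 0) +
      (if 0 < m then y ⟨m - 1, by omega⟩ else 0) := by
  classical
  have hdec : ∀ i : Fin n, J ⟨m, hm⟩ i * y i =
      (if (i : ℕ) = m + 1 then y i else 0) + (if (i : ℕ) = m - 1 ∧ 0 < m then y i else 0) := by
    intro i
    have hval : ((⟨m, hm⟩ : Fin n) : ℕ) = m := rfl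
    have hi := i.isLt
    rw [hJ]
    by_cases h1 : (i : ℕ) = m + 1
    · rw [if_pos (by omega), if_pos h1, if_neg (by omega), one_mul, add_zero]
    · by_cases h2 : (i : ℕ) = m - 1 ∧ 0 < m
      · rw [if_pos (by omega), if_neg h1, if_pos h2, one_mul, zero_add]
      · rw [if_neg (by omega), if_neg h1, if_neg h2, zero_mul, add_zero]
  show ∑ i, J ⟨m, hm⟩ i * y i = _
  rw [Finset.sum_congr rfl fun i _ => hdec i, Finset.sum_add_distrib]
  congr 1
  · by_cases h : m + 1 < n
    · rw [dif_pos h, Fintype.sum_eq_single (⟨m + 1, h⟩ : Fin n)]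
      · rw [if_pos rfl]
      · intro b hb
        rw [if_neg fun hc => hb (Fin.ext hc)]
    · rw [dif_neg h, Finset.sum_eq_zero]
      intro b _
      rw [if_neg (by have := b.isLt; omega)]
  · by_cases h : 0 < m
    · rw [if_pos h, Fintype.sum_eq_single (⟨m - 1, by omega⟩ : Fin n)]
      · rw [if_pos ⟨rfl, h⟩]
      · intro b hb
        rw [if_neg fun hc => hb (Fin.ext hc.1)]
    · rw [if_neg h, Finset.sum_eq_zero]
      intro b _
      rw [if_neg (by omega)]

private lemma aux2 (n : ℕ) (hn : 2 ≤ n) (J : Matrix (Fin n) (Fin n) (ZMod 2))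
    (hJ : ∀ i j : Fin n, J i j = if (i : ℕ) + 1 = j ∨ (j : ℕ) + 1 = i then 1 else 0)
    (y : Fin n → ZMod 2) :
    ∑ a, J.mulVec y a = y ⟨0, by omega⟩ + y ⟨n - 1, by omega⟩ := by
  classical
  haveI : NeZero n := ⟨by omega⟩
  have step : ∀ a : Fin n, J.mulVec y a =
      (y (a + 1) - if a = (⟨n - 1, by omega⟩ : Fin n) then y (a + 1) else 0) +
      (y (a - 1) - if a = (⟨0, by omega⟩ : Fin n) then y (a - 1) else 0) := by
    intro a
    have ha := a.isLt
    have h0 := aux1 n J hJ y (a : ℕ) a.isLt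
    rw [Fin.eta] at h0
    rw [h0]
    congr 1
    · by_cases h : (a : ℕ) + 1 < n
      · rw [dif_pos h, if_neg (fun hc => by
          have := congrArg Fin.val hc; simp at this; omega), sub_zero]
        congr 1
        apply Fin.ext
        have h1n : 1 % n = 1 := Nat.mod_eq_of_lt (by omega)
        simp [Fin.add_def, Fin.val_one', h1n]
        rw [Nat.mod_eq_of_lt h]
      · rw [dif_neg h, if_pos (by apply Fin.ext; simp; omega), sub_self]
    · by_cases h : 0 < (a : ℕ)
      · rw [if_pos h, if_neg (fun hc => by
          have := congrArg Fin.val hc; simp only [Fin.val_mk] at this; omega), sub_zero]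
        congr 1
        apply Fin.ext
        have h1n : 1 % n = 1 := Nat.mod_eq_of_lt (by omega)
        simp [Fin.sub_def, Fin.val_one', h1n]
        have h2 : n - 1 + (a : ℕ) = n + ((a : ℕ) - 1) := by omega
        rw [h2, Nat.add_mod_left, Nat.mod_eq_of_lt (by omega)]
      · rw [if_neg h, if_pos (by apply Fin.ext; simp only [Fin.val_mk]; omega), sub_self]
  rw [Finset.sum_congr rfl fun a _ => step a, Finset.sum_add_distrib,
    Finset.sum_sub_distrib, Finset.sum_sub_distrib,
    Finset.sum_ite_eq' Finset.univ (⟨n - 1, by omega⟩ : Fin n) (fun a => y (a + 1)),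
    Finset.sum_ite_eq' Finset.univ (⟨0, by omega⟩ : Fin n) (fun a => y (a - 1)),
    if_pos (Finset.mem_univ _), if_pos (Finset.mem_univ _)]
  have e1 : ∑ a : Fin n, y (a + 1) = ∑ a, y a :=
    Fintype.sum_equiv (Equiv.addRight 1) _ _ fun a => rfl
  have e2 : ∑ a : Fin n, y (a - 1) = ∑ a, y a :=
    Fintype.sum_equiv (Equiv.subRight 1) _ _ fun a => rfl
  have e3 : (⟨n - 1, by omega⟩ : Fin n) + 1 = (⟨0, by omega⟩ : Fin n) := by
    apply Fin.ext
    have h1n : 1 % n = 1 := Nat.mod_eq_of_lt (by omega)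
    simp [Fin.add_def, Fin.val_one', h1n]
    have h2 : n - 1 + 1 = n := by omega
    rw [h2, Nat.mod_self]
  have e4 : (⟨0, by omega⟩ : Fin n) - 1 = (⟨n - 1, by omega⟩ : Fin n) := by
    apply Fin.ext
    have h1n : 1 % n = 1 := Nat.mod_eq_of_lt (by omega)
    simp [Fin.sub_def, Fin.val_one', h1n]
    rw [Fin.coe_neg, Fin.val_one', h1n, Nat.mod_eq_of_lt (by omega)]
  rw [e1, e2, e3, e4]
  linear_combination two_cancel (∑ a, y a) - two_cancel (y (⟨0, by omega⟩ : Fin n))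
    - two_cancel (y (⟨n - 1, by omega⟩ : Fin n))

/-- If a subspace `F ⊆ F_2ⁿ` is stable under `J_n` and contained in the kernel of the
coordinate-sum map, then every element of `F` is symmetric (`y_i = y_{n+1-i}`), with zero
middle coordinate when `n` is odd; i.e. `F ⊆ Ker S`. -/
theorem stmt_17 (n : ℕ) (J : Matrix (Fin n) (Fin n) (ZMod 2))
    (hJ : ∀ i j : Fin n, J i j = if (i : ℕ) + 1 = j ∨ (j : ℕ) + 1 = i then 1 else 0)
    (F : Submodule (ZMod 2) (Fin n → ZMod 2))
    (hJF : ∀ y ∈ F, J.mulVec y ∈ F)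
    (hc : ∀ y ∈ F, ∑ i, y i = 0) :
    ∀ y ∈ F, (∀ i : Fin n, y i = y i.rev) ∧
      (∀ i : Fin n, 2 * (i : ℕ) + 1 = n → y i = 0) := by
  classical
  have key : ∀ k : ℕ, ∀ y ∈ F, ∀ h : k < n,
      y ⟨k, h⟩ + y ⟨n - 1 - k, by omega⟩ = 0 := by
    intro k
    induction k using Nat.strong_induction_on with
    | _ k IH =>
      match k with
      | 0 =>
        intro y hy hk
        by_cases hn : 2 ≤ n
        · have h0 := hc (J.mulVec y) (hJF y hy)
          rw [aux2 n hn J hJ y] at h0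
          have c0 : (⟨n - 1 - 0, by omega⟩ : Fin n) = ⟨n - 1, by omega⟩ := rfl
          rw [c0]
          exact h0
        · have c0 : (⟨n - 1 - 0, by omega⟩ : Fin n) = ⟨0, hk⟩ := by
            apply Fin.ext; simp; omega
          rw [c0]
          exact two_cancel _
      | 1 =>
        intro y hy hk
        have h1 := IH 0 (by omega) (J.mulVec y) (hJF y hy) (by omega)
        have e1 := aux1 n J hJ y 0 (by omega)
        have e2 := aux1 n J hJ y (n - 1 - 0) (by omega)
        rw [dif_pos (show 0 + 1 < n by omega), if_neg (show ¬ 0 < 0 by omega)] at e1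
        rw [dif_neg (show ¬ (n - 1 - 0 + 1 < n) by omega),
          if_pos (show 0 < n - 1 - 0 by omega)] at e2
        have c1 : (⟨n - 1 - 0 - 1, by omega⟩ : Fin n) = ⟨n - 1 - 1, by omega⟩ := by
          apply Fin.ext; simp
        rw [e1, e2, c1] at h1
        linear_combination h1
      | (j + 2) =>
        intro y hy hk
        have h1 := IH (j + 1) (by omega) (J.mulVec y) (hJF y hy) (by omega)
        have ih2 := IH j (by omega) y hy (by omega)
        have e1 := aux1 n J hJ y (j + 1) (by omega)
        have e2 := aux1 n J hJ y (n - 1 - (j + 1)) (by omega)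
        rw [dif_pos (show j + 1 + 1 < n by omega), if_pos (show 0 < j + 1 by omega)] at e1
        rw [dif_pos (show n - 1 - (j + 1) + 1 < n by omega),
          if_pos (show 0 < n - 1 - (j + 1) by omega)] at e2
        rw [e1, e2] at h1
        have c1 : (⟨n - 1 - (j + 1) + 1, by omega⟩ : Fin n) = ⟨n - 1 - j, by omega⟩ := by
          apply Fin.ext; simp; omega
        have c2 : (⟨n - 1 - (j + 1) - 1, by omega⟩ : Fin n) = ⟨n - 1 - (j + 2), by omega⟩ := by
          apply Fin.ext; simp; omega
        have c3 : (⟨j + 1 - 1, by omega⟩ : Fin n) = ⟨j, by omega⟩ := by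
          apply Fin.ext; simp
        rw [c1, c2, c3] at h1
        linear_combination h1 - ih2
  intro y hy
  have part1 : ∀ i : Fin n, y i = y i.rev := by
    intro i
    have h := key (i : ℕ) y hy i.isLt
    rw [Fin.eta] at h
    have hrev : i.rev = ⟨n - 1 - (i : ℕ), by have := i.isLt; omega⟩ := by
      apply Fin.ext; rw [Fin.val_rev]
      show n - ((i : ℕ) + 1) = n - 1 - (i : ℕ)
      omega
    rw [hrev]
    linear_combination h - two_cancel (y ⟨n - 1 - (i : ℕ), by have := i.isLt; omega⟩)
  refine ⟨part1, ?_⟩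
  intro i hi
  have hirev : i.rev = i := by
    apply Fin.ext; rw [Fin.val_rev]
    show n - ((i : ℕ) + 1) = (i : ℕ)
    omega
  have hsum := hc y hy
  rw [← Finset.add_sum_erase Finset.univ y (Finset.mem_univ i)] at hsum
  have hz : ∑ j ∈ Finset.univ.erase i, y j = 0 := by
    apply Finset.sum_involution (g := fun a _ => a.rev)
    · intro a ha
      rw [← part1 a]
      exact two_cancel (y a)
    · intro a ha _
      intro hreva
      have hv := congrArg Fin.val hreva
      rw [Fin.val_rev] at hv
      have ha' : a ≠ i := Finset.ne_of_mem_erase ha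
      apply ha'
      apply Fin.ext
      have := a.isLt
      omega
    · intro a ha
      exact Fin.rev_rev a
    · intro a ha
      apply Finset.mem_erase.2
      refine ⟨?_, Finset.mem_univ _⟩
      intro hreva
      have : a = i := by
        have := congrArg Fin.rev hreva
        rwa [Fin.rev_rev, hirev] at this
      exact Finset.ne_of_mem_erase ha this
  rw [hz, add_zero] at hsum
  exact hsum
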